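/- Let T be a tree on n vertices (a connected simple graph with n − 1 edges) and let x be any fixed vertex of T. Then there exists a finite sequence of edge slides transforming T into a graph in which x has degree n − 1 (so the resulting graph is a star centered at x). -/

import Mathlib

/-- An edge slide: given distinct vertices `x, y, z` with `x ~ y`, `y ~ z` and `x ≁ z`,
slide the edge `xy` to `xz`. -/
def EdgeSlide {V : Type*} (G G' : SimpleGraph V) : Prop :=
  ∃ x y z : V, x ≠ z ∧ G.Adj x y ∧ G.Adj y z ∧ ¬ G.Adj x z ∧
    G' = G.deleteEdges {s(x, y)} ⊔ SimpleGraph.fromEdgeSet {s(x, z)}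

open SimpleGraph in
private lemma config {V : Type*} (G : SimpleGraph V) (x : V) :
    ∀ (n : ℕ) {w : V} (p : G.Walk x w), p.length = n → w ≠ x → ¬ G.Adj x w →
      ∃ y z : V, G.Adj x y ∧ G.Adj y z ∧ z ≠ x ∧ ¬ G.Adj x z := by
  intro n
  induction n using Nat.strong_induction_on with
  | _ n ih =>
    intro w p hlen hw hnadj
    match p with
    | SimpleGraph.Walk.nil => exact absurd rfl hw
    | SimpleGraph.Walk.cons (v := b) h SimpleGraph.Walk.nil => exact absurd h hnadj
    | SimpleGraph.Walk.cons (v := b) h (SimpleGraph.Walk.cons (v := c) h' q') =>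
      by_cases hcx : c = x
      · subst hcx
        have hlt : q'.length < n := by simp at hlen; omega
        exact ih q'.length hlt q' rfl hw hnadj
      · by_cases hadj : G.Adj x c
        · have hlt : (SimpleGraph.Walk.cons hadj q').length < n := by
            simp at hlen ⊢; omega
          exact ih _ hlt (SimpleGraph.Walk.cons hadj q') rfl hw hnadj
        · exact ⟨b, c, h, h', hcx, hadj⟩

open SimpleGraph in
private lemma reach_mono {V : Type*} (G G' : SimpleGraph V)
    (h : ∀ u v, G.Adj u v → G'.Reachable u v) :
    ∀ u v, G.Reachable u v → G'.Reachable u v := by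
  intro u v huv
  obtain ⟨p⟩ := huv
  induction p with
  | nil => exact Reachable.refl _
  | cons ha _ ih => exact (h _ _ ha).trans ih


open SimpleGraph in
private lemma aux {V : Type*} [Fintype V] (x : V) :
    ∀ (k : ℕ) (G : SimpleGraph V), G.Connected →
      ({w : V | w ≠ x ∧ ¬ G.Adj x w}).ncard = k →
      ∃ G' : SimpleGraph V, Relation.ReflTransGen EdgeSlide G G' ∧
        (G'.neighborSet x).ncard = Fintype.card V - 1 := by
  intro k
  induction k with
  | zero =>
    intro G hc hS
    refine ⟨G, Relation.ReflTransGen.refl, ?_⟩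
    have hSfin : ({w : V | w ≠ x ∧ ¬ G.Adj x w}).Finite := Set.toFinite _
    have hSe : ({w : V | w ≠ x ∧ ¬ G.Adj x w}) = ∅ :=
      (Set.ncard_eq_zero hSfin).mp hS
    have hns : G.neighborSet x = {x}ᶜ := by
      ext w
      simp only [mem_neighborSet, Set.mem_compl_iff, Set.mem_singleton_iff]
      constructor
      · exact fun h => h.ne'
      · intro hw
        by_contra hn
        exact absurd (show w ∈ {w : V | w ≠ x ∧ ¬ G.Adj x w} from ⟨hw, hn⟩) (hSe ▸ Set.notMem_empty w)
    rw [hns]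
    rw [show ({x}ᶜ : Set V) = Set.univ \ {x} by ext u; simp]
    rw [Set.ncard_diff (Set.subset_univ _), Set.ncard_univ, Set.ncard_singleton,
      Nat.card_eq_fintype_card]
  | succ k ih =>
    intro G hc hS
    -- S nonempty
    have hSne : ({w : V | w ≠ x ∧ ¬ G.Adj x w}).Nonempty := by
      rw [← Set.ncard_pos (Set.toFinite _)]; omega
    obtain ⟨w, hw, hnadj⟩ := hSne
    obtain ⟨p⟩ := (hc x w)
    obtain ⟨y, z, hxy, hyz, hzx, hxz⟩ := config G x p.length p rfl hw hnadj
    set G' : SimpleGraph V :=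
      G.deleteEdges {s(z, y)} ⊔ SimpleGraph.fromEdgeSet {s(z, x)} with hG'
    have hslide : EdgeSlide G G' :=
      ⟨z, y, x, hzx, hyz.symm, hxy.symm, fun h => hxz h.symm, rfl⟩
    have hxney : x ≠ y := hxy.ne
    have hadj' : ∀ u v : V, G'.Adj u v ↔ (G.Adj u v ∧ s(u,v) ≠ s(z,y)) ∨ (s(u,v) = s(z,x) ∧ u ≠ v) := by
      intro u v
      simp [hG', SimpleGraph.deleteEdges_adj]
    have hadjx : ∀ u : V, G'.Adj x u ↔ G.Adj x u ∨ u = z := by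
      intro u
      rw [hadj' x u]
      constructor
      · rintro (⟨h1, _⟩ | ⟨h1, h2⟩)
        · exact Or.inl h1
        · rw [Sym2.eq_iff] at h1
          rcases h1 with ⟨h3, h4⟩ | ⟨h3, h4⟩
          · exact absurd h3.symm hzx
          · exact Or.inr h4
      · rintro (h1 | h1)
        · refine Or.inl ⟨h1, ?_⟩
          intro hh
          rw [Sym2.eq_iff] at hh
          rcases hh with ⟨h3, _⟩ | ⟨h3, _⟩
          · exact hzx h3.symm
          · exact hxney h3
        · subst h1
          exact Or.inr ⟨by rw [Sym2.eq_iff]; right; exact ⟨rfl, rfl⟩, fun h => hzx h.symm⟩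
    -- connectivity
    have hreach : ∀ u v, G.Adj u v → G'.Reachable u v := by
      intro u v huv
      by_cases he : s(u,v) = s(z,y)
      · have hzx' : G'.Adj z x := by
          rw [hadj']
          exact Or.inr ⟨rfl, hzx⟩
        have hxy' : G'.Adj x y := by
          rw [hadj']
          refine Or.inl ⟨hxy, ?_⟩
          intro hh
          rw [Sym2.eq_iff] at hh
          rcases hh with ⟨h3, _⟩ | ⟨h3, _⟩
          · exact hzx h3.symm
          · exact hxney h3
        rw [Sym2.eq_iff] at he
        rcases he with ⟨h3, h4⟩ | ⟨h3, h4⟩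
        · subst h3; subst h4
          exact hzx'.reachable.trans hxy'.reachable
        · subst h3; subst h4
          exact hxy'.reachable.symm.trans hzx'.reachable.symm
      · exact (by rw [hadj']; exact Or.inl ⟨huv, he⟩ : G'.Adj u v).reachable
    have hc' : G'.Connected := by
      rw [connected_iff]
      exact ⟨fun u v => reach_mono G G' hreach u v (hc u v), hc.nonempty⟩
    -- new S
    have hS' : {w : V | w ≠ x ∧ ¬ G'.Adj x w} = {w : V | w ≠ x ∧ ¬ G.Adj x w} \ {z} := by
      ext u
      simp only [Set.mem_setOf_eq, Set.mem_diff, Set.mem_singleton_iff, hadjx u]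
      tauto
    have hzmem : z ∈ {w : V | w ≠ x ∧ ¬ G.Adj x w} := ⟨hzx, hxz⟩
    have hScard : ({w : V | w ≠ x ∧ ¬ G'.Adj x w}).ncard = k := by
      rw [hS', Set.ncard_diff_singleton_of_mem hzmem, hS]
      omega
    obtain ⟨G'', hchain, hcard⟩ := ih G' hc' hScard
    exact ⟨G'', Relation.ReflTransGen.head hslide hchain, hcard⟩

/-- A tree (connected graph on `n` vertices with `n - 1` edges) can be slid so that a
chosen vertex `x` has degree `n - 1`. -/
theorem tree_to_star {V : Type*} [Fintype V] (T : SimpleGraph V)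
    (hc : T.Connected) (he : Nat.card T.edgeSet = Fintype.card V - 1) (x : V) :
    ∃ T' : SimpleGraph V, Relation.ReflTransGen EdgeSlide T T' ∧
      (T'.neighborSet x).ncard = Fintype.card V - 1 :=
  aux x ({w : V | w ≠ x ∧ ¬ T.Adj x w}).ncard T hc rfl
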